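/- Let p ∈ ℕ, let K ⊆ ℝ^p be a nonempty compact set, let R : ℝ^p → ℝ be continuous, let J : ℝ^p → ℝ be lower semicontinuous and bounded, let λ ≥ 0, let I be a finite set of coordinate indices in {1,…,p} with positive weights γᵢ > 0 for i ∈ I, and let f : ℝ → ℝ be concave with f(0) = 0 and f(y) → 1 as y → +∞. For σ > 0 define Φ_σ : ℝ^p → ℝ ∪ {+∞} by Φ_σ(x) = R(x) + λJ(x) + Σ_{i∈I} γᵢ f(|xᵢ|/σ) for x ∈ K and Φ_σ(x) = +∞ for x ∉ K, and define Φ₀(x) = R(x) + λJ(x) + Σ_{i∈I} γᵢ·𝟙{xᵢ ≠ 0} for x ∈ K and +∞ otherwise. Then for every sequence σ_k of positive reals strictly decreasing to 0, inf_{x ∈ ℝ^p} Φ_{σ_k}(x) → inf_{x ∈ ℝ^p} Φ₀(x) as k → ∞. -/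

import Mathlib

open scoped Classical
open Filter

section Aux

/-- A lower semicontinuous real function attains its minimum on a nonempty compact set. -/
lemma lsc_exists_min {X : Type*} [TopologicalSpace X] {K : Set X} (hne : K.Nonempty)
    (hc : IsCompact K) {f : X → ℝ} (hf : LowerSemicontinuous f) :
    ∃ x₀ ∈ K, ∀ x ∈ K, f x₀ ≤ f x := by
  classical
  have h := hc.inter_iInter_nonempty (ι := K) (fun x => f ⁻¹' Set.Iic (f x.1))
    (fun x => hf.isClosed_preimage _) ?_
  · obtain ⟨x₀, hx₀K, hx₀⟩ := h
    simp only [Set.mem_iInter, Set.mem_preimage, Set.mem_Iic] at hx₀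
    exact ⟨x₀, hx₀K, fun x hx => hx₀ ⟨x, hx⟩⟩
  · intro u
    rcases u.eq_empty_or_nonempty with rfl | hu
    · simpa using hne
    · obtain ⟨z, hzu, hz⟩ := u.exists_min_image (fun x => f x.1) hu
      refine ⟨z.1, z.2, ?_⟩
      simp only [Set.mem_iInter, Set.mem_preimage, Set.mem_Iic]
      exact fun x hx => hz x hx

/-- A concave function on ℝ with a finite limit at `atTop` is monotone. -/
lemma monotone_of_concave_of_tendsto {f : ℝ → ℝ} (hf : ConcaveOn ℝ Set.univ f)
    {c : ℝ} (hflim : Tendsto f atTop (nhds c)) : Monotone f := by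
  by_contra h
  rw [Monotone] at h
  push_neg at h
  obtain ⟨a, b, hab, hfab⟩ := h
  have hab' : a < b := lt_of_le_of_ne hab (by rintro rfl; exact lt_irrefl _ hfab)
  have hkey : ∀ t : ℝ, b < t → f t ≤ f b + (f b - f a) / (b - a) * (t - b) := by
    intro t ht
    have := hf.slope_anti_adjacent (Set.mem_univ a) (Set.mem_univ t) hab' ht
    have hbt : 0 < t - b := by linarith
    rw [div_le_div_iff₀ hbt (by linarith : (0:ℝ) < b - a)] at this
    have : f t - f b ≤ (f b - f a) / (b - a) * (t - b) := by
      rw [div_mul_eq_mul_div, le_div_iff₀ (by linarith : (0:ℝ) < b - a)]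
      linarith
    linarith
  set s : ℝ := (f b - f a) / (b - a) with hs
  have hsneg : s < 0 := div_neg_of_neg_of_pos (by linarith) (by linarith)
  -- eventually f t > c - 1
  have h1 : ∀ᶠ t in atTop, c - 1 < f t :=
    hflim (Ioi_mem_nhds (by linarith : c - 1 < c))
  obtain ⟨N, hN⟩ := eventually_atTop.1 h1
  set T : ℝ := max (max N (b + 1)) (b + (c - 1 - f b) / s + 1) with hT
  have hTb : b < T := lt_of_lt_of_le (by linarith) ((le_max_right N (b+1)).trans (le_max_left _ _))
  have hNT : N ≤ T := (le_max_left N _).trans (le_max_left _ _)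
  have h3 : (c - 1 - f b) / s + 1 ≤ T - b := by
    have := le_max_right ((N : ℝ) ⊔ (b + 1)) (b + (c - 1 - f b) / s + 1)
    linarith
  have h4 : s * (T - b) ≤ s * ((c - 1 - f b) / s + 1) :=
    mul_le_mul_of_nonpos_left h3 hsneg.le
  have h5 : s * ((c - 1 - f b) / s + 1) = (c - 1 - f b) + s := by
    rw [mul_add, mul_one, mul_div_cancel₀ _ hsneg.ne]
  have h6 := hkey T hTb
  have h7 := hN T hNT
  linarith

lemma lowerSemicontinuous_finset_sum {α ι : Type*} [TopologicalSpace α] (s : Finset ι)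
    (h : ι → α → ℝ) (hh : ∀ i ∈ s, LowerSemicontinuous (h i)) :
    LowerSemicontinuous fun x => ∑ i ∈ s, h i x := by
  classical
  induction s using Finset.induction_on with
  | empty => simpa using lowerSemicontinuous_const
  | @insert a s hnotmem ih =>
    simp only [Finset.sum_insert hnotmem]
    exact (hh a (Finset.mem_insert_self a s)).add
      (ih fun i hi => hh i (Finset.mem_insert_of_mem hi))

end Aux

/-- Part 1 of Theorem 4.1: the infimum of the continuous relaxation `Φ_{σ_k}` of the
weighted-ℓ₀-penalized objective converges to the infimum of the ℓ₀-penalized objective `Φ₀`. -/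
theorem inf_smoothed_tendsto_inf_l0 (p : ℕ)
    (K : Set (Fin p → ℝ)) (hKne : K.Nonempty) (hKc : IsCompact K)
    (R J : (Fin p → ℝ) → ℝ) (hR : Continuous R)
    (hJ : LowerSemicontinuous J) (hJb : ∃ M : ℝ, ∀ x, |J x| ≤ M)
    (lam : ℝ) (hlam : 0 ≤ lam)
    (I : Finset (Fin p)) (γ : Fin p → ℝ) (hγ : ∀ i ∈ I, 0 < γ i)
    (f : ℝ → ℝ) (hf : ConcaveOn ℝ Set.univ f) (hf0 : f 0 = 0)
    (hflim : Tendsto f atTop (nhds 1))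
    (σ : ℕ → ℝ) (hσpos : ∀ k, 0 < σ k) (hσanti : StrictAnti σ)
    (hσlim : Tendsto σ atTop (nhds 0))
    (Φ : ℕ → (Fin p → ℝ) → EReal)
    (hΦ : ∀ k x, Φ k x = if x ∈ K then
      (((R x + lam * J x + ∑ i ∈ I, γ i * f (|x i| / σ k)) : ℝ) : EReal) else ⊤)
    (Φ₀ : (Fin p → ℝ) → EReal)
    (hΦ₀ : ∀ x, Φ₀ x = if x ∈ K then
      (((R x + lam * J x + ∑ i ∈ I, γ i * (if x i ≠ 0 then (1 : ℝ) else 0)) : ℝ) : EReal)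
      else ⊤) :
    Tendsto (fun k => ⨅ x, Φ k x) atTop (nhds (⨅ x, Φ₀ x)) := by
  classical
  -- basic properties of f
  have hfmono : Monotone f := monotone_of_concave_of_tendsto hf hflim
  have hf_le_one : ∀ y : ℝ, f y ≤ 1 := by
    intro y
    exact ge_of_tendsto hflim (eventually_atTop.2 ⟨y, fun t ht => hfmono ht⟩)
  have hf_nonneg : ∀ y : ℝ, 0 ≤ y → 0 ≤ f y := fun y hy => hf0 ▸ hfmono hy
  have hfcont : Continuous f := by
    have h := hf.continuousOn isOpen_univ
    rwa [continuousOn_univ] at h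
  -- the real-valued objectives
  set g : ℕ → (Fin p → ℝ) → ℝ :=
    fun k x => R x + lam * J x + ∑ i ∈ I, γ i * f (|x i| / σ k) with hg
  set g0 : (Fin p → ℝ) → ℝ :=
    fun x => R x + lam * J x + ∑ i ∈ I, γ i * (if x i ≠ 0 then (1 : ℝ) else 0) with hg0
  -- lower semicontinuity
  have hlamJ : LowerSemicontinuous fun x => lam * J x := by
    have := Continuous.comp_lowerSemicontinuous (g := fun y : ℝ => lam * y)
      (continuous_const.mul continuous_id) hJ
      (fun a b hab => mul_le_mul_of_nonneg_left hab hlam)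
    exact this
  have hg_lsc : ∀ k, LowerSemicontinuous (g k) := by
    intro k
    have h1 : Continuous fun x : Fin p → ℝ => R x + ∑ i ∈ I, γ i * f (|x i| / σ k) := by
      refine hR.add (continuous_finset_sum I fun i _ => ?_)
      exact continuous_const.mul
        (hfcont.comp ((continuous_abs.comp (continuous_apply i)).div_const _))
    have := h1.lowerSemicontinuous.add hlamJ
    convert this using 2 with x
    · rfl
    · simp only [hg]; ring
  have hg0_lsc : LowerSemicontinuous g0 := by
    have h1 : LowerSemicontinuous fun x : Fin p → ℝ =>
        ∑ i ∈ I, γ i * (if x i ≠ 0 then (1 : ℝ) else 0) := by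
      refine lowerSemicontinuous_finset_sum I _ fun i hi => ?_
      have hopen : IsOpen {x : Fin p → ℝ | x i ≠ 0} :=
        isOpen_compl_iff.2 (isClosed_singleton.preimage (continuous_apply i))
      have hind := hopen.lowerSemicontinuous_indicator (le_of_lt (hγ i hi))
      convert hind using 1
      funext x
      by_cases h : x i ≠ 0 <;> simp [Set.indicator, h]
    exact (hR.lowerSemicontinuous.add hlamJ).add h1
  -- minimizers
  have hmin : ∀ k, ∃ x₀ ∈ K, ∀ x ∈ K, g k x₀ ≤ g k x :=
    fun k => lsc_exists_min hKne hKc (hg_lsc k)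
  choose xs hxsK hxsmin using hmin
  obtain ⟨xstar, hxstarK, hxstarmin⟩ := lsc_exists_min hKne hKc hg0_lsc
  set a : ℕ → ℝ := fun k => g k (xs k) with ha
  set m₀ : ℝ := g0 xstar with hm₀
  -- pointwise monotonicity in k
  have hgm : ∀ k l, k ≤ l → ∀ x, g k x ≤ g l x := by
    intro k l hkl x
    have : ∀ i ∈ I, γ i * f (|x i| / σ k) ≤ γ i * f (|x i| / σ l) := by
      intro i hi
      refine mul_le_mul_of_nonneg_left (hfmono ?_) (hγ i hi).le
      exact div_le_div_of_nonneg_left (abs_nonneg _) (hσpos l) (hσanti.antitone hkl)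
    have hsum := Finset.sum_le_sum this
    simp only [hg]
    linarith
  -- comparison with the limit objective
  have hgle0 : ∀ k x, g k x ≤ g0 x := by
    intro k x
    have : ∀ i ∈ I, γ i * f (|x i| / σ k) ≤ γ i * (if x i ≠ 0 then (1 : ℝ) else 0) := by
      intro i hi
      refine mul_le_mul_of_nonneg_left ?_ (hγ i hi).le
      by_cases h : x i = 0
      · simp [h, hf0]
      · simp only [h, ne_eq, not_false_eq_true, if_true]
        exact hf_le_one _
    have hsum := Finset.sum_le_sum this
    simp only [hg, hg0]
    linarith
  -- a is monotone and bounded by m₀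
  have hamono : Monotone a := by
    intro k l hkl
    calc a k = g k (xs k) := rfl
      _ ≤ g k (xs l) := hxsmin k (xs l) (hxsK l)
      _ ≤ g l (xs l) := hgm k l hkl _
  have hale : ∀ k, a k ≤ m₀ := fun k =>
    (hxsmin k xstar hxstarK).trans (hgle0 k xstar)
  have hbdd : BddAbove (Set.range a) := ⟨m₀, by rintro y ⟨k, rfl⟩; exact hale k⟩
  set L : ℝ := ⨆ k, a k with hL
  have haL : Tendsto a atTop (nhds L) := tendsto_atTop_ciSup hamono hbdd
  have hLle : L ≤ m₀ := ciSup_le hale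
  -- compactness: cluster point of the minimizers
  obtain ⟨xl, hxlK, φ, hφmono, hφtend⟩ := hKc.tendsto_subseq hxsK
  have hclaim : ∀ m, g m xl ≤ L := by
    intro m
    refine le_of_forall_lt fun y hy => ?_
    have h1 : ∀ᶠ z in nhds xl, y < g m z := hg_lsc m xl y hy
    have h2 : ∀ᶠ j in atTop, y < g m (xs (φ j)) := hφtend.eventually h1
    have h3 : ∀ᶠ j in atTop, m ≤ φ j :=
      eventually_atTop.2 ⟨m, fun j hj => hj.trans hφmono.le_apply⟩
    obtain ⟨j, hj2, hj3⟩ := (h2.and h3).exists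
    calc y < g m (xs (φ j)) := hj2
      _ ≤ g (φ j) (xs (φ j)) := hgm m (φ j) hj3 _
      _ ≤ L := le_ciSup hbdd (φ j)
  -- pointwise convergence g m xl → g0 xl
  have hpt : Tendsto (fun m => g m xl) atTop (nhds (g0 xl)) := by
    simp only [hg, hg0]
    refine Tendsto.add tendsto_const_nhds ?_
    refine tendsto_finset_sum I fun i hi => ?_
    by_cases h : xl i = 0
    · simp only [h, ne_eq, not_true_eq_false, if_false, abs_zero, zero_div, hf0,
        mul_zero]
      exact tendsto_const_nhds
    · have hdiv : Tendsto (fun m => |xl i| / σ m) atTop atTop := by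
        have h1 : Tendsto σ atTop (nhdsWithin 0 (Set.Ioi 0)) :=
          tendsto_nhdsWithin_of_tendsto_nhds_of_eventually_within σ hσlim
            (Eventually.of_forall fun k => hσpos k)
        have h2 : Tendsto (fun m => (σ m)⁻¹) atTop atTop :=
          tendsto_inv_nhdsGT_zero.comp h1
        have h3 : Tendsto (fun m => |xl i| * (σ m)⁻¹) atTop atTop :=
          h2.const_mul_atTop (abs_pos.2 h)
        simpa [div_eq_mul_inv] using h3
      have h4 : Tendsto (fun m => γ i * f (|xl i| / σ m)) atTop (nhds (γ i * 1)) :=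
        Tendsto.const_mul (γ i) (hflim.comp hdiv)
      simpa [h] using h4
  have hgl : g0 xl ≤ L := le_of_tendsto hpt (Eventually.of_forall hclaim)
  have hLeq : L = m₀ := le_antisymm hLle ((hxstarmin xl hxlK).trans hgl)
  -- transfer to the EReal infima
  have hinf_k : ∀ k, (⨅ x, Φ k x) = ((a k : ℝ) : EReal) := by
    intro k
    apply le_antisymm
    · have := iInf_le (fun x => Φ k x) (xs k)
      rwa [hΦ, if_pos (hxsK k)] at this
    · refine le_iInf fun x => ?_
      rw [hΦ]
      split_ifs with hx
      · exact_mod_cast hxsmin k x hx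
      · exact le_top
  have hinf_0 : (⨅ x, Φ₀ x) = ((m₀ : ℝ) : EReal) := by
    apply le_antisymm
    · have := iInf_le (fun x => Φ₀ x) xstar
      rwa [hΦ₀, if_pos hxstarK] at this
    · refine le_iInf fun x => ?_
      rw [hΦ₀]
      split_ifs with hx
      · exact EReal.coe_le_coe_iff.2 (hxstarmin x hx)
      · exact le_top
  rw [hinf_0]
  simp only [hinf_k]
  rw [EReal.tendsto_coe]
  rw [← hLeq]
  exact haL
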